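/- arXiv:1308.6702 — 3 statements merged into one kernel-verified Lean document; each statement's English description precedes it below -/
import Mathlib

section
/- Let Ω be a finite set, let Q ⊆ ℝ^Ω be a closed convex set of probability distributions, let p* be a probability distribution on Ω, and let q* ∈ Q minimize D(p*‖q) over q ∈ Q, with D(p*‖q*) < ∞. Then for every q ∈ Q, Σ_{x∈Ω} q(x) · p*(x)/q*(x) ≤ 1 (where terms with p*(x) = 0 are read as 0). -/
open Filter Finset

noncomputable section

variable {Ω : Type*}

/-- `p` is a probability distribution on the finite set `Ω`. -/
def IsProbDist [Fintype Ω] (p : Ω → ℝ) : Prop :=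
  (∀ x, 0 ≤ p x) ∧ ∑ x, p x = 1

/-- Relative entropy `D(p‖q)`, valued in `EReal`, equal to `⊤` when `p` is not
absolutely continuous with respect to `q`. -/
def relEnt [Fintype Ω] (p q : Ω → ℝ) : EReal :=
  if ∀ x, q x = 0 → p x = 0
  then ((∑ x, p x * Real.log (p x / q x) : ℝ) : EReal)
  else ⊤

/-- An adaptive strategy: in round `k` (0-indexed), having observed the previous
`k` samples, it outputs a distribution on `Ω` for the next sample. -/
def Strategy (Ω : Type*) : Type _ := (k : ℕ) → (Fin k → Ω) → (Ω → ℝ)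

/-- A strategy is a valid adaptive `P`-strategy if every distribution it plays lies in `P`. -/
def Strategy.Valid (P : Set (Ω → ℝ)) (σ : Strategy Ω) : Prop :=
  ∀ k (h : Fin k → Ω), σ k h ∈ P

/-- The probability assigned by an adaptive strategy to the sample sequence `x ∈ Ω^n`. -/
def Strategy.prob (σ : Strategy Ω) {n : ℕ} (x : Fin n → Ω) : ℝ :=
  ∏ k : Fin n, σ k.1 (fun i : Fin k.1 => x ⟨i.1, i.2.trans k.2⟩) (x k)

/-- The probability assigned by an adaptive strategy to a set `A ⊆ Ω^n`. -/
def Strategy.setProb (σ : Strategy Ω) {n : ℕ} (A : Finset (Fin n → Ω)) : ℝ :=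
  ∑ x ∈ A, σ.prob x

/-- If `q* ∈ Q` minimizes `D(p*‖q)` over the closed convex set `Q` of probability
distributions, with `D(p*‖q*) < ∞`, then for every `q ∈ Q`,
`∑_x q(x) · p*(x)/q*(x) ≤ 1` (terms with `p*(x) = 0` read as `0`; in Lean, division
by zero is zero, so terms with `q*(x) = 0`, which force `p*(x) = 0`, vanish). -/
theorem likelihood_ratio_mean_le_one_of_minimizer {Ω : Type*} [Fintype Ω]
    (Q : Set (Ω → ℝ)) (hQ : ∀ q ∈ Q, IsProbDist q)
    (hQclosed : IsClosed Q) (hQconv : Convex ℝ Q)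
    (pstar : Ω → ℝ) (hpstar : IsProbDist pstar)
    (qstar : Ω → ℝ) (hqstar : qstar ∈ Q)
    (hmin : ∀ q ∈ Q, relEnt pstar qstar ≤ relEnt pstar q)
    (hfin : relEnt pstar qstar ≠ ⊤) :
    ∀ q ∈ Q, ∑ x, q x * (pstar x / qstar x) ≤ 1 := by
  intro q hq
  have habs : ∀ x, qstar x = 0 → pstar x = 0 := by
    by_contra h
    simp only [relEnt, if_neg h, ne_eq, not_true_eq_false] at hfin
  have hp0 : ∀ x, 0 ≤ pstar x := hpstar.1
  have hq0 : ∀ x, 0 ≤ q x := (hQ q hq).1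
  have hqs0 : ∀ x, 0 ≤ qstar x := (hQ qstar hqstar).1
  set a : Ω → ℝ → ℝ := fun x t => qstar x + t * (q x - qstar x) with ha
  set D : ℝ := ∑ x, pstar x * ((q x - qstar x) / qstar x) with hD
  set F : ℝ → ℝ := fun t => ∑ x, pstar x * Real.log (a x t / qstar x) with hF
  -- derivative of F at 0
  have hderiv : HasDerivAt F D 0 := by
    rw [hF, hD]
    apply HasDerivAt.fun_sum
    intro x _
    by_cases hpx : pstar x = 0
    · simpa [hpx] using (hasDerivAt_const (0:ℝ) (0:ℝ))
    · have hqsx : qstar x ≠ 0 := fun h => hpx (habs x h)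
      have ha1 : HasDerivAt (fun t => a x t) (q x - qstar x) 0 := by
        simpa [ha] using ((hasDerivAt_id (0:ℝ)).mul_const (q x - qstar x)).const_add (qstar x)
      have hne : a x 0 / qstar x ≠ 0 := by
        simp [ha, hqsx]
      have hlog := ((ha1.div_const (qstar x)).log hne).const_mul (pstar x)
      have : a x 0 = qstar x := by simp [ha]
      rw [this] at hlog
      field_simp at hlog ⊢
      convert hlog using 1
  -- F t ≤ 0 on (0,1)
  have key : ∀ t ∈ Set.Ioo (0:ℝ) 1, F t ≤ 0 := by
    intro t ht
    have hqt : (fun x => a x t) ∈ Q := by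
      have h := hQconv hqstar hq (by linarith [ht.2] : (0:ℝ) ≤ 1 - t) (le_of_lt ht.1)
        (by ring)
      convert h using 1
      funext x
      simp [ha, Pi.smul_apply, smul_eq_mul]
      ring
    have habst : ∀ x, a x t = 0 → pstar x = 0 := by
      intro x hx
      have hx' : (1 - t) * qstar x + t * q x = 0 := by rw [← hx, ha]; ring
      have : qstar x = 0 := by nlinarith [hqs0 x, hq0 x, ht.1, ht.2]
      exact habs x this
    have hle : (∑ x, pstar x * Real.log (pstar x / qstar x) : ℝ)
        ≤ ∑ x, pstar x * Real.log (pstar x / a x t) := by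
      have := hmin (fun x => a x t) hqt
      rw [relEnt, relEnt, if_pos habs, if_pos habst] at this
      exact_mod_cast this
    have hFt : F t = (∑ x, pstar x * Real.log (pstar x / qstar x))
        - ∑ x, pstar x * Real.log (pstar x / a x t) := by
      rw [hF, ← Finset.sum_sub_distrib]
      apply Finset.sum_congr rfl
      intro x _
      by_cases hpx : pstar x = 0
      · simp [hpx]
      · have hqsx : qstar x ≠ 0 := fun h => hpx (habs x h)
        have hatx : a x t ≠ 0 := fun h => hpx (habst x h)
        rw [Real.log_div hatx hqsx, Real.log_div hpx hqsx, Real.log_div hpx hatx]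
        ring
    linarith
  -- F 0 = 0
  have hF0 : F 0 = 0 := by
    rw [hF]
    apply Finset.sum_eq_zero
    intro x _
    by_cases hqsx : qstar x = 0
    · simp [habs x hqsx]
    · simp [ha, div_self hqsx]
  -- D ≤ 0 via slope limit from the right
  have hD0 : D ≤ 0 := by
    have h1 : HasDerivWithinAt F D (Set.Ioi 0) 0 := hderiv.hasDerivWithinAt
    rw [hasDerivWithinAt_iff_tendsto_slope] at h1
    have hs : Set.Ioi (0:ℝ) \ {0} = Set.Ioi 0 := by
      apply Set.diff_singleton_eq_self
      simp
    rw [hs] at h1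
    refine le_of_tendsto h1 ?_
    filter_upwards [Ioo_mem_nhdsGT (by norm_num : (0:ℝ) < 1)] with t ht
    have h2 := key t ht
    rw [slope_def_field, hF0]
    simp only [sub_zero]
    exact div_nonpos_of_nonpos_of_nonneg h2 (le_of_lt ht.1)
  -- conclude
  have hsum : ∑ x, q x * (pstar x / qstar x) = D + ∑ x, pstar x := by
    rw [hD, ← Finset.sum_add_distrib]
    apply Finset.sum_congr rfl
    intro x _
    by_cases hqsx : qstar x = 0
    · simp [hqsx, habs x hqsx]
    · field_simp
      ring
  rw [hsum, hpstar.2]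
  linarith
end
end

section
/- Let Ω be a finite set, let P, Q ⊆ ℝ^Ω be closed convex sets of probability distributions, let (p*, q*) minimize D(p‖q) over P × Q with 0 < D(p*‖q*) < ∞, and for ε > 0 and n ∈ ℕ define A_{n,ε} = { x ∈ Ω^n : log Π_{i=1}^n (p*(x_i)/q*(x_i)) ≥ n(D(p*‖q*) − ε) }. Then for every adaptive Q-strategy q̂, q̂(A_{n,ε}) ≤ exp(−n(D(p*‖q*) − ε)). -/
open Filter Finset

noncomputable section

variable {Ω : Type*}

open Topology

def Strategy.shift (σ : Strategy Ω) (a : Ω) : Strategy Ω :=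
  fun k h => σ (k+1) (Fin.cons a h)

lemma Strategy.shift_valid {Q : Set (Ω → ℝ)} {σ : Strategy Ω} (h : σ.Valid Q) (a : Ω) :
    (σ.shift a).Valid Q := fun k hh => h (k+1) _

lemma Strategy.prob_cons (σ : Strategy Ω) {n : ℕ} (a : Ω) (y : Fin n → Ω) :
    σ.prob (Fin.cons a y) = σ 0 ![] a * (σ.shift a).prob y := by
  unfold Strategy.prob Strategy.shift
  rw [Fin.prod_univ_succ]
  congr 1
  · congr 1
    funext i; exact i.elim0
  · apply Finset.prod_congr rfl
    intro k _
    have h1 : (Fin.cons a y : Fin (n+1) → Ω) k.succ = y k := by simp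
    have h2 : (fun i : Fin (k.succ).1 => (Fin.cons a y : Fin (n+1) → Ω) ⟨i.1, i.2.trans k.succ.2⟩)
        = Fin.cons a (fun i : Fin k.1 => y ⟨i.1, i.2.trans k.2⟩) := by
      funext i
      refine Fin.cases ?_ (fun j => ?_) i
      · rfl
      · rfl
    rw [h1, h2]; rfl

lemma Strategy.prob_nonneg {Q : Set (Ω → ℝ)} [Fintype Ω] (hQ : ∀ q ∈ Q, IsProbDist q)
    {σ : Strategy Ω} (hσ : σ.Valid Q) {n : ℕ} (x : Fin n → Ω) : 0 ≤ σ.prob x :=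
  Finset.prod_nonneg fun k _ => (hQ _ (hσ k.1 _)).1 _

lemma key_sum_le_one [Fintype Ω] (Q : Set (Ω → ℝ)) (hQ : ∀ q ∈ Q, IsProbDist q)
    (r : Ω → ℝ) (hr : ∀ y, 0 ≤ r y) (hbd : ∀ q ∈ Q, ∑ y, q y * r y ≤ 1) :
    ∀ n (σ : Strategy Ω), σ.Valid Q →
      ∑ x : Fin n → Ω, σ.prob x * ∏ i, r (x i) ≤ 1 := by
  intro n
  induction n with
  | zero =>
    intro σ hσ
    simp [Strategy.prob]
  | succ n ih =>
    intro σ hσ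
    have he := (Equiv.sum_comp (Fin.consEquiv (fun _ : Fin (n+1) => Ω))
      (fun x => σ.prob x * ∏ i, r (x i))).symm
    simp only [Fin.consEquiv_apply] at he
    rw [he, Fintype.sum_prod_type]
    have hstep : ∀ a : Ω, ∑ y : Fin n → Ω, σ.prob (Fin.cons a y) * ∏ i, r ((Fin.cons a y : Fin (n+1) → Ω) i)
        ≤ σ 0 ![] a * r a := by
      intro a
      have : ∀ y : Fin n → Ω, σ.prob (Fin.cons a y) * ∏ i, r ((Fin.cons a y : Fin (n+1) → Ω) i)
          = (σ 0 ![] a * r a) * ((σ.shift a).prob y * ∏ i, r (y i)) := by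
        intro y
        rw [Strategy.prob_cons, Fin.prod_univ_succ]
        simp [Fin.cons_succ]
        ring
      rw [Finset.sum_congr rfl (fun y _ => this y), ← Finset.mul_sum]
      have h1 : 0 ≤ σ 0 ![] a * r a :=
        mul_nonneg ((hQ _ (hσ 0 ![])).1 a) (hr a)
      calc σ 0 ![] a * r a * ∑ y : Fin n → Ω, (σ.shift a).prob y * ∏ i, r (y i)
          ≤ σ 0 ![] a * r a * 1 := by
            apply mul_le_mul_of_nonneg_left (ih _ (σ.shift_valid hσ a)) h1
        _ = σ 0 ![] a * r a := mul_one _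
    calc ∑ a : Ω, ∑ y : Fin n → Ω, σ.prob (Fin.cons a y) * ∏ i, r ((Fin.cons a y : Fin (n+1) → Ω) i)
        ≤ ∑ a : Ω, σ 0 ![] a * r a := Finset.sum_le_sum fun a _ => hstep a
      _ ≤ 1 := hbd _ (hσ 0 ![])

lemma keyA [Fintype Ω] (Q : Set (Ω → ℝ))
    (hQ : ∀ q ∈ Q, IsProbDist q) (hQconv : Convex ℝ Q)
    (pstar qstar : Ω → ℝ) (hp : IsProbDist pstar) (hqstar : qstar ∈ Q)
    (hac : ∀ x, qstar x = 0 → pstar x = 0)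
    (hmin : ∀ q ∈ Q, relEnt pstar qstar ≤ relEnt pstar q)
    (q : Ω → ℝ) (hq : q ∈ Q) :
    ∑ y, q y * (pstar y / qstar y) ≤ 1 := by
  -- reduce to  s := ∑ y, pstar y * (q y / qstar y) ≤ 1
  have hrw : ∀ y, q y * (pstar y / qstar y) = pstar y * (q y / qstar y) := by
    intro y; ring
  rw [Finset.sum_congr rfl fun y _ => hrw y]
  by_contra hs
  push_neg at hs
  set s : ℝ := ∑ y, pstar y * (q y / qstar y) with hs_def
  -- positivity of qstar where pstar > 0
  have hqpos : ∀ y, pstar y ≠ 0 → 0 < qstar y := by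
    intro y hy
    rcases lt_or_eq_of_le ((hQ _ hqstar).1 y) with h | h
    · exact h
    · exact absurd (hac y h.symm) hy
  -- the function g
  set g : ℝ → ℝ := fun t => ∑ y, pstar y * Real.log ((1-t) * qstar y + t * q y) with hg_def
  have hderiv : HasDerivAt g (s - 1) 0 := by
    have h1 : HasDerivAt g (∑ y, pstar y * ((q y - qstar y) / qstar y)) 0 := by
      apply HasDerivAt.fun_sum
      intro y _
      by_cases hy : pstar y = 0
      · simp only [hy, zero_mul]
        simpa using (hasDerivAt_const (0:ℝ) (0:ℝ))
      · have hq0 : (0:ℝ) < qstar y := hqpos y hy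
        have hinner : HasDerivAt (fun t : ℝ => (1-t) * qstar y + t * q y) (q y - qstar y) 0 := by
          have : HasDerivAt (fun t : ℝ => (1-t) * qstar y + t * q y)
              ((-1) * qstar y + 1 * q y) 0 := by
            exact (((hasDerivAt_id 0).const_sub 1).mul_const (qstar y)).add
              ((hasDerivAt_id 0).mul_const (q y))
          convert this using 1; ring
        have hval : (1-(0:ℝ)) * qstar y + 0 * q y = qstar y := by ring
        have hlog : HasDerivAt (fun t : ℝ => Real.log ((1-t) * qstar y + t * q y))
            ((q y - qstar y) / qstar y) 0 := by
          have := hinner.log (by rw [hval]; exact ne_of_gt hq0)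
          rw [hval] at this
          exact this
        exact hlog.const_mul (pstar y)
    have h2 : ∑ y, pstar y * ((q y - qstar y) / qstar y) = s - 1 := by
      have : ∀ y, pstar y * ((q y - qstar y) / qstar y)
          = pstar y * (q y / qstar y) - pstar y := by
        intro y
        by_cases hy : pstar y = 0
        · simp [hy]
        · have hq0 := (hqpos y hy).ne'
          field_simp
      rw [Finset.sum_congr rfl fun y _ => this y, Finset.sum_sub_distrib, hp.2, hs_def]
    rwa [h2] at h1
  -- find t ∈ (0,1) with g t > g 0
  have hslope : Tendsto (slope g 0) (𝓝[>] 0) (𝓝 (s - 1)) :=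
    (hasDerivAt_iff_tendsto_slope.mp hderiv).mono_left
      (nhdsWithin_mono 0 fun t ht => ne_of_gt ht)
  have hpos' : (0:ℝ) < s - 1 := by linarith
  have hev : ∀ᶠ t in 𝓝[>] (0:ℝ), 0 < slope g 0 t :=
    hslope.eventually (eventually_gt_nhds hpos')
  have hev2 : ∀ᶠ t in 𝓝[>] (0:ℝ), t < 1 :=
    eventually_nhdsWithin_of_eventually_nhds (eventually_lt_nhds one_pos)
  obtain ⟨t, htslope, ht1, ht0⟩ := (hev.and (hev2.and self_mem_nhdsWithin)).exists
  have hgt : g 0 < g t := by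
    have hsl : slope g 0 t = (g t - g 0) / t := by
      rw [slope_def_field]; ring_nf
    rw [hsl] at htslope
    by_contra hle
    push_neg at hle
    have : (g t - g 0) / t ≤ 0 := div_nonpos_of_nonpos_of_nonneg (by linarith) (le_of_lt ht0)
    linarith
  -- the perturbed distribution
  set qt : Ω → ℝ := fun y => (1-t) * qstar y + t * q y with hqt_def
  have hqtQ : qt ∈ Q := by
    have := hQconv hqstar hq (by linarith : (0:ℝ) ≤ 1 - t) (le_of_lt ht0) (by ring)
    convert this using 1
    ext y; simp only [hqt_def, Pi.add_apply, Pi.smul_apply, smul_eq_mul]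
  have hqtpos : ∀ y, pstar y ≠ 0 → 0 < qt y := by
    intro y hy
    have h1 : 0 < qstar y := hqpos y hy
    have h2 : 0 ≤ q y := (hQ _ hq).1 y
    have : 0 < (1-t) * qstar y := mul_pos (by linarith) h1
    have : 0 ≤ t * q y := mul_nonneg (le_of_lt ht0) h2
    simp only [hqt_def]
    linarith
  have hacqt : ∀ y, qt y = 0 → pstar y = 0 := by
    intro y hy
    by_contra hne
    exact absurd hy (ne_of_gt (hqtpos y hne))
  -- compute relEnt values
  have hE1 : relEnt pstar qstar = ((∑ y, pstar y * Real.log (pstar y / qstar y) : ℝ) : EReal) := by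
    rw [relEnt, if_pos hac]
  have hE2 : relEnt pstar qt = ((∑ y, pstar y * Real.log (pstar y / qt y) : ℝ) : EReal) := by
    rw [relEnt, if_pos hacqt]
  have hle := hmin qt hqtQ
  rw [hE1, hE2, EReal.coe_le_coe_iff] at hle
  have hsplit : ∀ (u : Ω → ℝ), (∀ y, pstar y ≠ 0 → 0 < u y) →
      ∑ y, pstar y * Real.log (pstar y / u y)
        = ∑ y, pstar y * Real.log (pstar y) - ∑ y, pstar y * Real.log (u y) := by
    intro u hu
    rw [← Finset.sum_sub_distrib]
    apply Finset.sum_congr rfl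
    intro y _
    by_cases hy : pstar y = 0
    · simp [hy]
    · rw [Real.log_div hy (ne_of_gt (hu y hy))]; ring
  have e1 := hsplit qstar hqpos
  have e2 := hsplit qt hqtpos
  have hg0 : g 0 = ∑ y, pstar y * Real.log (qstar y) := by
    simp only [hg_def]
    apply Finset.sum_congr rfl
    intro y _
    norm_num
  have hgtval : g t = ∑ y, pstar y * Real.log (qt y) := rfl
  rw [e1, e2, ← hg0, ← hgtval] at hle
  linarith

open Classical in
/-- The acceptance region
`A_{n,ε} = { x ∈ Ω^n : log ∏_i p*(x_i)/q*(x_i) ≥ n (D(p*‖q*) − ε) }`,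
where `D(p*‖q*) = ∑_x p*(x) log(p*(x)/q*(x))`. -/
def acceptRegion [Fintype Ω] (pstar qstar : Ω → ℝ) (n : ℕ) (ε : ℝ) :
    Finset (Fin n → Ω) :=
  Finset.univ.filter fun x : Fin n → Ω =>
    (n : ℝ) * ((∑ y, pstar y * Real.log (pstar y / qstar y)) - ε)
      ≤ Real.log (∏ i, pstar (x i) / qstar (x i))

/-- If `(p*, q*)` minimizes `D(p‖q)` over `P × Q` with `0 < D(p*‖q*) < ∞`, then every
adaptive `Q`-strategy `q̂` satisfies `q̂(A_{n,ε}) ≤ exp(−n (D(p*‖q*) − ε))`. -/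
theorem accept_prob_le_exp {Ω : Type*} [Fintype Ω] [DecidableEq Ω]
    (P Q : Set (Ω → ℝ))
    (hP : ∀ p ∈ P, IsProbDist p) (hQ : ∀ q ∈ Q, IsProbDist q)
    (hPclosed : IsClosed P) (hQclosed : IsClosed Q)
    (hPconv : Convex ℝ P) (hQconv : Convex ℝ Q)
    (pstar qstar : Ω → ℝ) (hpstar : pstar ∈ P) (hqstar : qstar ∈ Q)
    (hmin : ∀ p ∈ P, ∀ q ∈ Q, relEnt pstar qstar ≤ relEnt p q)
    (hfin : relEnt pstar qstar ≠ ⊤)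
    (hpos : (0 : EReal) < relEnt pstar qstar) :
    ∀ σ : Strategy Ω, σ.Valid Q → ∀ ε > (0 : ℝ), ∀ n : ℕ,
      σ.setProb (acceptRegion pstar qstar n ε)
        ≤ Real.exp (-(n : ℝ) *
            ((∑ y, pstar y * Real.log (pstar y / qstar y)) - ε)) := by
  -- absolute continuity from finiteness
  have hac : ∀ x, qstar x = 0 → pstar x = 0 := by
    by_contra hcon
    exact hfin (by rw [relEnt, if_neg hcon])
  set D0 : ℝ := ∑ y, pstar y * Real.log (pstar y / qstar y) with hD0
  set r : Ω → ℝ := fun y => pstar y / qstar y with hr_def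
  have hr : ∀ y, 0 ≤ r y := fun y =>
    div_nonneg ((hP _ hpstar).1 y) ((hQ _ hqstar).1 y)
  have hbd : ∀ q ∈ Q, ∑ y, q y * r y ≤ 1 :=
    keyA Q hQ hQconv pstar qstar (hP _ hpstar) hqstar hac
      (fun q hq => hmin pstar hpstar q hq)
  intro σ hσ ε hε n
  set c : ℝ := (n : ℝ) * (D0 - ε) with hc
  have hgoal_exp : Real.exp (-(n : ℝ) * (D0 - ε)) = Real.exp (-c) := by
    rw [hc]; ring_nf
  have hsum1 : ∑ x : Fin n → Ω, σ.prob x ≤ 1 := by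
    have := key_sum_le_one Q hQ (fun _ => (1:ℝ)) (fun _ => zero_le_one)
      (fun q hq => by rw [Finset.sum_congr rfl fun y _ => mul_one (q y), (hQ q hq).2]) n σ hσ
    simpa using this
  have hprob_nonneg : ∀ x : Fin n → Ω, 0 ≤ σ.prob x :=
    fun x => Strategy.prob_nonneg hQ hσ x
  have hsumr : ∑ x : Fin n → Ω, σ.prob x * ∏ i, r (x i) ≤ 1 :=
    key_sum_le_one Q hQ r hr hbd n σ hσ
  by_cases hcpos : c ≤ 0
  · -- trivial case
    have h1 : σ.setProb (acceptRegion pstar qstar n ε) ≤ ∑ x : Fin n → Ω, σ.prob x := by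
      apply Finset.sum_le_sum_of_subset_of_nonneg (Finset.subset_univ _)
      intro x _ _; exact hprob_nonneg x
    have h2 : (1:ℝ) ≤ Real.exp (-c) := Real.one_le_exp (by linarith)
    rw [hgoal_exp]
    exact le_trans (le_trans h1 hsum1) (le_trans h2 (le_refl _))
  · push_neg at hcpos
    have hA : ∀ x ∈ acceptRegion pstar qstar n ε,
        σ.prob x ≤ Real.exp (-c) * (σ.prob x * ∏ i, r (x i)) := by
      intro x hx
      have hmem : c ≤ Real.log (∏ i, pstar (x i) / qstar (x i)) := by
        have := Finset.mem_filter.mp hx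
        exact this.2
      have hprodr : (∏ i, r (x i)) = ∏ i, pstar (x i) / qstar (x i) := rfl
      have hne : (∏ i, pstar (x i) / qstar (x i)) ≠ 0 := by
        intro h0
        rw [h0, Real.log_zero] at hmem
        linarith
      have hpr : (0:ℝ) < ∏ i, pstar (x i) / qstar (x i) :=
        lt_of_le_of_ne (Finset.prod_nonneg fun i _ => hr (x i)) (Ne.symm hne)
      have hge : Real.exp c ≤ ∏ i, pstar (x i) / qstar (x i) := by
        rw [← Real.exp_log hpr]
        exact Real.exp_le_exp.mpr hmem
      have h1 : (1:ℝ) ≤ Real.exp (-c) * ∏ i, pstar (x i) / qstar (x i) := by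
        calc (1:ℝ) = Real.exp (-c) * Real.exp c := by
              rw [← Real.exp_add]; simp
          _ ≤ Real.exp (-c) * ∏ i, pstar (x i) / qstar (x i) :=
              mul_le_mul_of_nonneg_left hge (Real.exp_nonneg _)
      calc σ.prob x = σ.prob x * 1 := (mul_one _).symm
        _ ≤ σ.prob x * (Real.exp (-c) * ∏ i, pstar (x i) / qstar (x i)) :=
            mul_le_mul_of_nonneg_left h1 (hprob_nonneg x)
        _ = Real.exp (-c) * (σ.prob x * ∏ i, r (x i)) := by rw [hprodr]; ring
    rw [hgoal_exp]
    calc σ.setProb (acceptRegion pstar qstar n ε)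
        ≤ ∑ x ∈ acceptRegion pstar qstar n ε,
            Real.exp (-c) * (σ.prob x * ∏ i, r (x i)) := Finset.sum_le_sum hA
      _ = Real.exp (-c) * ∑ x ∈ acceptRegion pstar qstar n ε,
            σ.prob x * ∏ i, r (x i) := by rw [Finset.mul_sum]
      _ ≤ Real.exp (-c) * ∑ x : Fin n → Ω, σ.prob x * ∏ i, r (x i) := by
            apply mul_le_mul_of_nonneg_left _ (Real.exp_nonneg _)
            apply Finset.sum_le_sum_of_subset_of_nonneg (Finset.subset_univ _)
            intro x _ _
            exact mul_nonneg (hprob_nonneg x) (Finset.prod_nonneg fun i _ => hr (x i))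
      _ ≤ Real.exp (-c) * 1 := mul_le_mul_of_nonneg_left hsumr (Real.exp_nonneg _)
      _ = Real.exp (-c) := mul_one _
end
end

section
/- Let Ω be a finite set, let Q ⊆ ℝ^Ω be a closed convex set of probability distributions, let p* be a probability distribution on Ω and q* ∈ Q a minimizer of D(p*‖q) over q ∈ Q with D(p*‖q*) < ∞. Then for every adaptive Q-strategy q̂ and every n, the expected likelihood ratio satisfies E_{q̂}[ Π_{i=1}^n p*(X_i)/q*(X_i) ] ≤ 1, where X_1,…,X_n are distributed according to q̂ (i.e., the sequence of likelihood ratios Π_{i=1}^n p*(X_i)/q*(X_i) is a supermartingale with respect to q̂). -/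
open Filter Finset

noncomputable section

variable {Ω : Type*}

lemma logGe (u : ℝ) (hu : -(1/2) ≤ u) : u - 2*u^2 ≤ Real.log (1+u) := by
  have h1 : 0 < 1 + u := by linarith
  have h3 : Real.log (1+u)⁻¹ ≤ (1+u)⁻¹ - 1 := Real.log_le_sub_one_of_pos (by positivity)
  rw [Real.log_inv] at h3
  have h4 : (1+u)⁻¹ = 1 - u/(1+u) := by field_simp; ring
  have h5 : u - 2*u^2 ≤ u/(1+u) := by
    rw [le_div_iff₀ h1]; nlinarith [sq_nonneg u, mul_nonneg (sq_nonneg u) (by linarith : (0:ℝ) ≤ 1+2*u)]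
  rw [h4] at h3
  linarith

lemma sum_neg_of_log {Ω : Type*} [Fintype Ω] (p a : Ω → ℝ) (hp : ∀ x, 0 ≤ p x)
    (h : ∀ t : ℝ, 0 < t → t ≤ 1/2 → ∑ x, p x * Real.log (1 + t * a x) ≤ 0) :
    ∑ x, p x * a x ≤ 0 := by
  set M : ℝ := 1 + ∑ x, |a x| with hMdef
  have hM : 1 ≤ M := by
    have : (0:ℝ) ≤ ∑ x, |a x| := Finset.sum_nonneg fun x _ => abs_nonneg _
    linarith
  have haM : ∀ x, |a x| ≤ M := by
    intro x
    have : |a x| ≤ ∑ y, |a y| :=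
      Finset.single_le_sum (fun y _ => abs_nonneg (a y)) (Finset.mem_univ x)
    linarith
  set C : ℝ := ∑ x, p x * (a x)^2 with hCdef
  have hC : 0 ≤ C := Finset.sum_nonneg fun x _ => mul_nonneg (hp x) (sq_nonneg _)
  set S : ℝ := ∑ x, p x * a x with hSdef
  set t₀ : ℝ := min (1/2) (1/(2*M)) with ht₀def
  have ht₀ : 0 < t₀ := lt_min (by norm_num) (by positivity)
  have key : ∀ t : ℝ, 0 < t → t ≤ t₀ → S ≤ 2 * t * C := by
    intro t ht ht'
    have htM : ∀ x, -(1/2) ≤ t * a x := by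
      intro x
      have h1 : |t * a x| ≤ 1/2 := by
        rw [abs_mul, abs_of_pos ht]
        have : t * |a x| ≤ (1/(2*M)) * M :=
          mul_le_mul (le_trans ht' (min_le_right _ _)) (haM x) (abs_nonneg _) (by positivity)
        calc t * |a x| ≤ (1/(2*M)) * M := this
          _ = 1/2 := by field_simp
      linarith [neg_abs_le (t * a x)]
    have h0 := h t ht (le_trans ht' (min_le_left _ _))
    have hlb : ∑ x, p x * (t * a x - 2*(t * a x)^2) ≤ ∑ x, p x * Real.log (1 + t * a x) :=
      Finset.sum_le_sum fun x _ => mul_le_mul_of_nonneg_left (logGe (t * a x) (htM x)) (hp x)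
    have heq : ∑ x, p x * (t * a x - 2*(t * a x)^2) = t * S - 2*t^2 * C := by
      rw [hSdef, hCdef, Finset.mul_sum, Finset.mul_sum, ← Finset.sum_sub_distrib]
      exact Finset.sum_congr rfl fun x _ => by ring
    have hts : t * S ≤ t * (2 * t * C) := by nlinarith
    exact le_of_mul_le_mul_left hts ht
  by_contra hS
  push_neg at hS
  set t : ℝ := min t₀ (S/(2*(C+1))) with htdef
  have ht : 0 < t := lt_min ht₀ (by positivity)
  have h1 : S ≤ 2 * t * C := key t ht (min_le_left _ _)
  have h2 : t ≤ S/(2*(C+1)) := min_le_right _ _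
  have h3 : t * (2*(C+1)) ≤ S := (le_div_iff₀ (by positivity)).mp h2
  nlinarith

lemma snoc_cast {Ω : Type*} {n : ℕ} (x : Fin n → Ω) (y : Ω) (m : ℕ) (h : m < n) (h' : m < n+1) :
    (Fin.snoc x y : Fin (n+1) → Ω) ⟨m, h'⟩ = x ⟨m, h⟩ := by
  have : (⟨m, h'⟩ : Fin (n+1)) = Fin.castSucc ⟨m, h⟩ := rfl
  rw [this, Fin.snoc_castSucc]

lemma prob_snoc {Ω : Type*} (σ : Strategy Ω) {n : ℕ} (x : Fin n → Ω) (y : Ω) :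
    σ.prob (Fin.snoc x y) = σ.prob x * σ n x y := by
  unfold Strategy.prob
  rw [Fin.prod_univ_castSucc]
  congr 1
  · apply Finset.prod_congr rfl
    intro j _
    have h1 : (fun i : Fin (Fin.castSucc j).1 =>
          (Fin.snoc x y : Fin (n+1) → Ω) ⟨i.1, i.2.trans (Fin.castSucc j).2⟩)
        = fun i : Fin j.1 => x ⟨i.1, i.2.trans j.2⟩ := by
      funext i
      exact snoc_cast x y i.1 _ _
    rw [h1, Fin.snoc_castSucc]
    rfl
  · have h2 : (fun i : Fin (Fin.last n).1 =>
          (Fin.snoc x y : Fin (n+1) → Ω) ⟨i.1, i.2.trans (Fin.last n).2⟩)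
        = x := by
      funext i
      exact snoc_cast x y i.1 i.2 _
    rw [h2, Fin.snoc_last]
    rfl

lemma sum_snoc {Ω : Type*} [Fintype Ω] {n : ℕ} (f : (Fin (n+1) → Ω) → ℝ) :
    ∑ z : Fin (n+1) → Ω, f z = ∑ x : Fin n → Ω, ∑ y : Ω, f (Fin.snoc x y) := by
  have hbij : Function.Bijective
      (fun p : (Fin n → Ω) × Ω => (Fin.snoc p.1 p.2 : Fin (n+1) → Ω)) := by
    constructor
    · rintro ⟨x, y⟩ ⟨x', y'⟩ h
      have h1 := congrArg Fin.init h
      have h2 := congrArg (fun g : Fin (n+1) → Ω => g (Fin.last n)) h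
      simp only [Fin.init_snoc] at h1
      simp only [Fin.snoc_last] at h2
      simp [h1, h2]
    · intro z
      exact ⟨(Fin.init z, z (Fin.last n)), Fin.snoc_init_self z⟩
  rw [← Fintype.sum_bijective _ hbij _ f (fun p => rfl), Fintype.sum_prod_type]

/-- Supermartingale property of the likelihood ratio: if `q* ∈ Q` minimizes `D(p*‖q)` over
the closed convex set `Q` with `D(p*‖q*) < ∞`, then for every adaptive `Q`-strategy `q̂` and
every `n`, the expected likelihood ratio satisfies
`E_{q̂}[ ∏_{i=1}^n p*(X_i)/q*(X_i) ] ≤ 1`. -/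
theorem likelihood_ratio_supermartingale {Ω : Type*} [Fintype Ω]
    (Q : Set (Ω → ℝ)) (hQ : ∀ q ∈ Q, IsProbDist q)
    (hQclosed : IsClosed Q) (hQconv : Convex ℝ Q)
    (pstar : Ω → ℝ) (hpstar : IsProbDist pstar)
    (qstar : Ω → ℝ) (hqstar : qstar ∈ Q)
    (hmin : ∀ q ∈ Q, relEnt pstar qstar ≤ relEnt pstar q)
    (hfin : relEnt pstar qstar ≠ ⊤) :
    ∀ σ : Strategy Ω, σ.Valid Q → ∀ n : ℕ,
      ∑ x : Fin n → Ω, σ.prob x * ∏ i, pstar (x i) / qstar (x i) ≤ 1 := by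
  -- absolute continuity
  have habs : ∀ x, qstar x = 0 → pstar x = 0 := by
    by_contra h
    exact hfin (by rw [relEnt, if_neg h])
  have hps := hQ qstar hqstar
  -- one-step inequality
  have step : ∀ q ∈ Q, ∑ y, q y * (pstar y / qstar y) ≤ 1 := by
    intro q hq
    have hqd := hQ q hq
    have hkey : ∑ x, pstar x * (q x / qstar x - 1) ≤ 0 := by
      apply sum_neg_of_log pstar (fun x => q x / qstar x - 1) hpstar.1
      intro t ht ht'
      set qt : Ω → ℝ := fun x => (1-t) * qstar x + t * q x with hqtdef
      have hqtQ : qt ∈ Q := by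
        have := hQconv hqstar hq (by linarith : (0:ℝ) ≤ 1-t) (le_of_lt ht) (by ring)
        convert this using 2
        funext x
        simp [hqtdef]
      have hqtpos : ∀ x, qstar x ≠ 0 → 0 < qt x := by
        intro x hx
        have h1 : 0 < qstar x := lt_of_le_of_ne ((hQ qstar hqstar).1 x) (Ne.symm hx)
        have h2 : 0 ≤ q x := hqd.1 x
        have : 0 < (1-t) * qstar x := by nlinarith
        simp only [hqtdef]
        nlinarith
      have habst : ∀ x, qt x = 0 → pstar x = 0 := by
        intro x hx
        by_contra hpx
        have : qstar x ≠ 0 := fun h0 => hpx (habs x h0)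
        exact absurd hx (ne_of_gt (hqtpos x this))
      have hD := hmin qt hqtQ
      rw [relEnt, if_pos habs, relEnt, if_pos habst, EReal.coe_le_coe_iff] at hD
      have heq : ∑ x, pstar x * Real.log (1 + t * (q x / qstar x - 1))
          = (∑ x, pstar x * Real.log (pstar x / qstar x))
            - ∑ x, pstar x * Real.log (pstar x / qt x) := by
        rw [← Finset.sum_sub_distrib]
        apply Finset.sum_congr rfl
        intro x _
        rcases eq_or_lt_of_le (hpstar.1 x) with hx | hx
        · simp [← hx]
        · have hqsx : 0 < qstar x :=
            lt_of_le_of_ne ((hQ qstar hqstar).1 x)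
              (fun h0 => absurd (habs x h0.symm) (ne_of_gt hx))
          have hqtx : 0 < qt x := hqtpos x (ne_of_gt hqsx)
          have harg : 1 + t * (q x / qstar x - 1) = qt x / qstar x := by
            field_simp [hqtdef]
            try ring
          rw [harg, Real.log_div (ne_of_gt hqtx) (ne_of_gt hqsx),
            Real.log_div (ne_of_gt hx) (ne_of_gt hqsx),
            Real.log_div (ne_of_gt hx) (ne_of_gt hqtx)]
          ring
      rw [heq]
      linarith
    have hsum : ∑ y, q y * (pstar y / qstar y)
        = (∑ x, pstar x * (q x / qstar x - 1)) + ∑ x, pstar x := by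
      rw [← Finset.sum_add_distrib]
      apply Finset.sum_congr rfl
      intro x _
      rcases eq_or_ne (qstar x) 0 with h0 | h0
      · simp [h0, habs x h0]
      · field_simp
        ring
    rw [hsum, hpstar.2]
    linarith
  -- nonnegativity facts
  intro σ hσ n
  have hprobnn : ∀ {m : ℕ} (x : Fin m → Ω), 0 ≤ σ.prob x := by
    intro m x
    apply Finset.prod_nonneg
    intro k _
    exact (hQ _ (hσ k.1 _)).1 _
  have hrnn : ∀ {m : ℕ} (x : Fin m → Ω), 0 ≤ ∏ i, pstar (x i) / qstar (x i) := by
    intro m x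
    exact Finset.prod_nonneg fun i _ => div_nonneg (hpstar.1 _) ((hQ qstar hqstar).1 _)
  induction n with
  | zero =>
    simp [Strategy.prob]
  | succ n ih =>
    rw [sum_snoc]
    have hstep : ∀ x : Fin n → Ω,
        ∑ y, σ.prob (Fin.snoc x y : Fin (n+1) → Ω) * ∏ i, pstar ((Fin.snoc x y : Fin (n+1) → Ω) i) / qstar ((Fin.snoc x y : Fin (n+1) → Ω) i)
          ≤ σ.prob x * ∏ i, pstar (x i) / qstar (x i) := by
      intro x
      have hprod : ∀ y : Ω, (∏ i : Fin (n+1), pstar ((Fin.snoc x y : Fin (n+1) → Ω) i) / qstar ((Fin.snoc x y : Fin (n+1) → Ω) i))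
          = (∏ i : Fin n, pstar (x i) / qstar (x i)) * (pstar y / qstar y) := by
        intro y
        rw [Fin.prod_univ_castSucc]
        simp [Fin.snoc_castSucc, Fin.snoc_last]
      have heq : ∑ y, σ.prob (Fin.snoc x y : Fin (n+1) → Ω) * ∏ i, pstar ((Fin.snoc x y : Fin (n+1) → Ω) i) / qstar ((Fin.snoc x y : Fin (n+1) → Ω) i)
          = (σ.prob x * ∏ i, pstar (x i) / qstar (x i)) * ∑ y, σ n x y * (pstar y / qstar y) := by
        rw [Finset.mul_sum]
        apply Finset.sum_congr rfl
        intro y _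
        rw [prob_snoc, hprod y]
        ring
      rw [heq]
      have h1 : ∑ y, σ n x y * (pstar y / qstar y) ≤ 1 := step (σ n x) (hσ n x)
      have h2 : 0 ≤ σ.prob x * ∏ i, pstar (x i) / qstar (x i) :=
        mul_nonneg (hprobnn x) (hrnn x)
      nlinarith
    calc ∑ x : Fin n → Ω, ∑ y, σ.prob (Fin.snoc x y : Fin (n+1) → Ω) *
            ∏ i, pstar ((Fin.snoc x y : Fin (n+1) → Ω) i) / qstar ((Fin.snoc x y : Fin (n+1) → Ω) i)
        ≤ ∑ x : Fin n → Ω, σ.prob x * ∏ i, pstar (x i) / qstar (x i) :=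
          Finset.sum_le_sum fun x _ => hstep x
      _ ≤ 1 := ih
end
end
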